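/- Let b ∈ ℕ, b ≥ 2, and ξ = e^{2πi/b}. Then ∑_{j=1}^{b} ψ(j/b) ξ^j = b · Log(1 - ξ), where ψ = Γ'/Γ is the digamma function and Log is the principal branch of the logarithm. -/

import Mathlib

open Complex Real

/-- The digamma function `ψ = Γ'/Γ` on the reals. -/
noncomputable def digamma (x : ℝ) : ℝ := deriv Real.Gamma x / Real.Gamma x

open Filter Topology Finset

local notation "γ" => Real.eulerMascheroniConstant

lemma deriv_logGamma_eq (x : ℝ) (hx : 0 < x) :
    deriv (Real.log ∘ Real.Gamma) x = _root_.digamma x := by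
  rw [Function.comp_def, deriv.log (Real.differentiableAt_Gamma (fun m ↦ by
    have : (0:ℝ) ≤ m := m.cast_nonneg; intro h; rw [h] at hx; linarith)) (by positivity), _root_.digamma]

lemma deriv_logGamma_diff {x : ℝ} (hx : 0 < x) :
    DifferentiableAt ℝ (Real.log ∘ Real.Gamma) x := by
  refine ((Real.differentiableAt_Gamma ?_).log (Real.Gamma_ne_zero ?_)) <;>
    exact fun m ↦ by have : (0:ℝ) ≤ m := m.cast_nonneg; intro h; rw [h] at hx; linarith

lemma deriv_logGamma_mono {a c : ℝ} (ha : 0 < a) (hc : 0 < c) (hac : a ≤ c) :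
    deriv (Real.log ∘ Real.Gamma) a ≤ deriv (Real.log ∘ Real.Gamma) c :=
  Real.convexOn_log_Gamma.monotoneOn_deriv (fun _ hx ↦ deriv_logGamma_diff hx) ha hc hac

lemma deriv_logGamma_rec {x : ℝ} (hx : 0 < x) :
    deriv (Real.log ∘ Real.Gamma) (x + 1) = deriv (Real.log ∘ Real.Gamma) x + 1 / x := by
  have h_rec : ∀ y : ℝ, 0 < y → (Real.log ∘ Real.Gamma) (y + 1)
      = (Real.log ∘ Real.Gamma) y + Real.log y := fun y hy => by
    simp only [Function.comp_apply, Real.Gamma_add_one hy.ne',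
      Real.log_mul hy.ne' (Real.Gamma_pos_of_pos hy).ne', add_comm]
  rw [← deriv_comp_add_const, one_div, ← Real.deriv_log,
    ← deriv_add (deriv_logGamma_diff hx) (Real.differentiableAt_log hx.ne')]
  apply Filter.EventuallyEq.deriv_eq
  filter_upwards [eventually_gt_nhds hx] using h_rec

lemma deriv_logGamma_nat (N : ℕ) :
    deriv (Real.log ∘ Real.Gamma) (N + 1) = -γ + harmonic N := by
  have h := Real.deriv_Gamma_nat N
  have h2 := deriv_logGamma_eq (N + 1) (by positivity)
  rw [_root_.digamma, h, Real.Gamma_nat_eq_factorial,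
    mul_div_cancel_left₀ _ (Nat.cast_ne_zero.mpr N.factorial_ne_zero)] at h2
  exact h2

lemma deriv_logGamma_add_nat {x : ℝ} (hx : 0 < x) (N : ℕ) :
    deriv (Real.log ∘ Real.Gamma) (x + N)
      = deriv (Real.log ∘ Real.Gamma) x + ∑ k ∈ Finset.range N, 1 / (x + k) := by
  induction N with
  | zero => simp
  | succ n ih =>
    have : x + (n + 1 : ℕ) = (x + n) + 1 := by push_cast; ring
    rw [this, deriv_logGamma_rec (by positivity), ih, Finset.sum_range_succ]
    ring

lemma digamma_tendsto {x : ℝ} (hx : 0 < x) (hx1 : x ≤ 1) :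
    Tendsto (fun N : ℕ ↦ (harmonic N : ℝ) - ∑ k ∈ Finset.range N, 1 / (x + k))
      atTop (𝓝 (_root_.digamma x + γ)) := by
  set D := deriv (Real.log ∘ Real.Gamma) x with hD
  have key : ∀ M : ℕ, D + γ ≤ ((harmonic (M+1) : ℝ) - ∑ k ∈ Finset.range (M+1), 1 / (x + k)) ∧
      ((harmonic (M+1) : ℝ) - ∑ k ∈ Finset.range (M+1), 1 / (x + k)) ≤ D + γ + 1/(M+1) := by
    intro M
    have hsum := deriv_logGamma_add_nat hx (M + 1)
    have hlow : deriv (Real.log ∘ Real.Gamma) ((M:ℝ) + 1)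
        ≤ deriv (Real.log ∘ Real.Gamma) (x + (M + 1 : ℕ)) := by
      apply deriv_logGamma_mono (by positivity) (by positivity)
      push_cast; linarith
    have hhigh : deriv (Real.log ∘ Real.Gamma) (x + (M + 1 : ℕ))
        ≤ deriv (Real.log ∘ Real.Gamma) ((M:ℝ) + 1 + 1) := by
      apply deriv_logGamma_mono (by positivity) (by positivity)
      push_cast; linarith
    rw [hsum, deriv_logGamma_nat M] at hlow
    have e2 : ((M:ℝ) + 1 + 1) = ((M + 1 : ℕ) : ℝ) + 1 := by push_cast; ring
    rw [hsum, e2, deriv_logGamma_nat (M + 1)] at hhigh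
    have hh : (harmonic (M+1) : ℝ) = (harmonic M : ℝ) + 1/(M+1) := by
      rw [harmonic_succ]; push_cast; ring
    constructor
    · linarith [hhigh]
    · push_cast at hh ⊢; linarith [hlow, hh]
  have hDg : _root_.digamma x = D := (deriv_logGamma_eq x hx).symm
  rw [hDg]
  rw [← tendsto_add_atTop_iff_nat 1]
  refine tendsto_of_tendsto_of_tendsto_of_le_of_le (g := fun _ : ℕ ↦ D + γ)
    (h := fun M : ℕ ↦ D + γ + 1/((M:ℝ)+1)) tendsto_const_nhds ?_
    (fun M ↦ (key M).1) (fun M ↦ (key M).2)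
  have : Tendsto (fun M : ℕ ↦ 1/((M:ℝ)+1)) atTop (𝓝 0) := tendsto_one_div_add_atTop_nhds_zero_nat
  simpa using tendsto_const_nhds.add this

open Complex Real Filter Topology Finset

lemma re_lt_one_of_norm_one {ξ : ℂ} (hn : ‖ξ‖ = 1) (h1 : ξ ≠ 1) : ξ.re < 1 := by
  rcases lt_or_eq_of_le (Complex.re_le_norm ξ |>.trans_eq hn) with h | h
  · exact h
  · exfalso
    apply h1
    have hsq : ξ.re ^ 2 + ξ.im ^ 2 = 1 := by
      have h2 := Complex.sq_norm ξ
      rw [Complex.normSq_apply] at h2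
      have h3 : ‖ξ‖ = 1 := hn
      rw [h3] at h2
      nlinarith [h2]
    have him : ξ.im = 0 := by nlinarith [h, hsq]
    exact Complex.ext (by simp [h]) (by simp [him])

lemma one_sub_mem_slitPlane {ξ : ℂ} (hn : ‖ξ‖ = 1) (h1 : ξ ≠ 1) :
    1 - ξ ∈ Complex.slitPlane := by
  rw [Complex.mem_slitPlane_iff]
  left
  simp only [Complex.sub_re, Complex.one_re]
  linarith [re_lt_one_of_norm_one hn h1]

lemma tendsto_sum_pow_div_nat (ξ : ℂ) (hn : ‖ξ‖ = 1) (h1 : ξ ≠ 1) :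
    Tendsto (fun n : ℕ ↦ ∑ m ∈ Finset.range n, ξ ^ m / m) atTop
      (𝓝 (-Complex.log (1 - ξ))) := by
  -- Dirichlet's test gives convergence to some limit l
  have hbdd : ∀ n : ℕ, ‖∑ i ∈ Finset.range n, ξ ^ (i + 1)‖ ≤ 2 / ‖ξ - 1‖ := by
    intro n
    have : ∑ i ∈ Finset.range n, ξ ^ (i + 1) = ξ * ((ξ ^ n - 1) / (ξ - 1)) := by
      rw [← geom_sum_eq h1]
      rw [Finset.mul_sum]
      exact Finset.sum_congr rfl fun i _ ↦ by ring
    rw [this, norm_mul, hn, one_mul, norm_div]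
    have hpos : 0 < ‖ξ - 1‖ := norm_pos_iff.mpr (sub_ne_zero.mpr h1)
    gcongr
    calc ‖ξ ^ n - 1‖ ≤ ‖ξ ^ n‖ + ‖(1:ℂ)‖ := norm_sub_le _ _
      _ = 2 := by rw [norm_pow, hn]; norm_num
  have hanti : Antitone (fun i : ℕ ↦ 1 / ((i:ℝ) + 1)) := by
    intro a b hab
    apply one_div_le_one_div_of_le (by positivity)
    have : (a:ℝ) ≤ b := Nat.cast_le.mpr hab
    linarith
  have hzero : Tendsto (fun i : ℕ ↦ 1 / ((i:ℝ) + 1)) atTop (𝓝 0) :=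
    tendsto_one_div_add_atTop_nhds_zero_nat
  have hC : CauchySeq fun n ↦ ∑ i ∈ Finset.range n, (1 / ((i:ℝ) + 1)) • ξ ^ (i + 1) :=
    hanti.cauchySeq_series_mul_of_tendsto_zero_of_bounded hzero hbdd
  obtain ⟨l, hl⟩ := cauchySeq_tendsto_of_complete hC
  -- partial sums of ξ^m/m tend to l
  have hps : Tendsto (fun n : ℕ ↦ ∑ m ∈ Finset.range n, ξ ^ m / m) atTop (𝓝 l) := by
    rw [← tendsto_add_atTop_iff_nat 1]
    convert hl using 2 with n
    rw [Finset.sum_range_succ']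
    simp only [Nat.cast_zero, div_zero, add_zero, pow_zero]
    refine Finset.sum_congr rfl fun i _ ↦ ?_
    push_cast
    rw [Complex.real_smul]
    push_cast
    ring
  -- Abel's limit theorem identifies l
  have habel := Complex.tendsto_tsum_powerSeries_nhdsWithin_lt hps
  rw [tendsto_map'_iff] at habel
  have heq : ∀ᶠ x : ℝ in 𝓝[<] (1:ℝ),
      ((fun z ↦ ∑' n : ℕ, (ξ ^ n / n) * z ^ n) ∘ Complex.ofReal) x
        = -Complex.log (1 - x * ξ) := by
    filter_upwards [Ioo_mem_nhdsLT_of_mem (Set.mem_Ioc.mpr ⟨by norm_num, le_refl (1:ℝ)⟩)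
      (a := (-1:ℝ))] with x hx
    have hxn : ‖(x:ℂ) * ξ‖ < 1 := by
      rw [norm_mul, hn, mul_one, Complex.norm_real, Real.norm_eq_abs, abs_lt]
      exact ⟨hx.1, hx.2⟩
    have := Complex.hasSum_taylorSeries_neg_log hxn
    rw [← this.tsum_eq]
    apply tsum_congr fun n ↦ ?_
    rw [mul_pow]
    ring
  have htendsto2 : Tendsto (fun x : ℝ ↦ -Complex.log (1 - x * ξ)) (𝓝[<] (1:ℝ))
      (𝓝 (-Complex.log (1 - ξ))) := by
    have hc : ContinuousAt (fun x : ℝ ↦ -Complex.log (1 - x * ξ)) 1 := by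
      apply ContinuousAt.neg
      apply ContinuousAt.comp (g := Complex.log)
      · apply continuousAt_clog
        simpa using one_sub_mem_slitPlane hn h1
      · fun_prop
    have := hc.continuousWithinAt (s := Set.Iio (1:ℝ)) |>.tendsto
    simpa using this
  have : l = -Complex.log (1 - ξ) :=
    tendsto_nhds_unique (habel.congr' heq) htendsto2
  rwa [this] at hps

lemma reindex_Icc_mul (b N : ℕ) (hb : 1 ≤ b) (g : ℕ → ℂ) :
    ∑ m ∈ Finset.Icc 1 (N * b), g m
      = ∑ j ∈ Finset.Icc 1 b, ∑ k ∈ Finset.range N, g (j + b * k) := by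
  rw [← Finset.sum_product']
  refine Finset.sum_nbij' (fun m ↦ ((m - 1) % b + 1, (m - 1) / b))
    (fun p ↦ p.1 + b * p.2) ?_ ?_ ?_ ?_ ?_
  · rintro m hm
    rw [Finset.mem_Icc] at hm
    simp only [Finset.mem_product, Finset.mem_Icc, Finset.mem_range]
    refine ⟨⟨le_add_self.trans (le_refl _), ?_⟩, ?_⟩
    · have := Nat.mod_lt (m - 1) (show 0 < b by omega)
      omega
    · rw [Nat.div_lt_iff_lt_mul (show 0 < b by omega)]
      omega
  · rintro ⟨j, k⟩ hp
    simp only [Finset.mem_product, Finset.mem_Icc, Finset.mem_range] at hp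
    rw [Finset.mem_Icc]
    constructor
    · exact le_trans hp.1.1 (Nat.le_add_right _ _)
    · calc j + b * k ≤ b + b * k := by omega
        _ = b * (k + 1) := by ring
        _ ≤ b * N := Nat.mul_le_mul_left b (by omega)
        _ = N * b := Nat.mul_comm b N
  · intro m hm
    rw [Finset.mem_Icc] at hm
    simp only
    calc (m-1) % b + 1 + b * ((m-1)/b) = ((m-1) % b + b * ((m-1)/b)) + 1 := by ring
      _ = (m-1) + 1 := by rw [Nat.mod_add_div]
      _ = m := by omega
  · rintro ⟨j, k⟩ hp
    simp only [Finset.mem_product, Finset.mem_Icc, Finset.mem_range] at hp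
    have h1 : j + b * k - 1 = (j - 1) + b * k := by omega
    simp only [h1, Nat.add_mul_mod_self_left, Nat.add_mul_div_left _ _ (show 0 < b by omega),
      Nat.mod_eq_of_lt (show j - 1 < b by omega), Nat.div_eq_of_lt (show j - 1 < b by omega)]
    ext <;> simp <;> omega
  · intro m hm
    rw [Finset.mem_Icc] at hm
    simp only
    congr 1
    calc m = ((m-1) % b + b * ((m-1)/b)) + 1 := by rw [Nat.mod_add_div]; omega
      _ = (m-1) % b + 1 + b * ((m-1)/b) := by ring

/-- `∑_{j=1}^{b} ψ(j/b) ξ^j = b · Log(1-ξ)` for `ξ = e^{2πi/b}`. -/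
theorem digamma_root_of_unity_sum (b : ℕ) (hb : 2 ≤ b) :
    ∑ j ∈ Finset.Icc 1 b, (_root_.digamma (j / b) : ℂ) * Complex.exp (2 * π * I / b) ^ j
      = b * Complex.log (1 - Complex.exp (2 * π * I / b)) := by
  set ξ := Complex.exp (2 * π * I / b) with hξ
  have hbR : (0:ℝ) < b := by exact_mod_cast (show 0 < b by omega)
  have hbne : (b:ℂ) ≠ 0 := Nat.cast_ne_zero.mpr (by omega)
  have hzrw : 2 * (π:ℂ) * I / b = ((2 * π / b : ℝ) : ℂ) * I := by push_cast; ring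
  have hnorm : ‖ξ‖ = 1 := by
    rw [hξ, hzrw, Complex.norm_exp_ofReal_mul_I]
  have hξb : ξ ^ b = 1 := by
    rw [hξ, ← Complex.exp_nat_mul,
      show (b:ℂ) * (2 * π * I / b) = 2 * π * I by field_simp]
    exact Complex.exp_two_pi_mul_I
  have h2piI : (2 * (π:ℂ) * I) ≠ 0 := by
    simp [Real.pi_ne_zero, Complex.I_ne_zero, Complex.ofReal_ne_zero]
  have hξ1 : ξ ≠ 1 := by
    intro h
    obtain ⟨n, hn⟩ := Complex.exp_eq_one_iff.mp (hξ ▸ h)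
    have h4 : (2*(π:ℂ)*I) * 1 = (2*(π:ℂ)*I) * ((n:ℂ) * b) := by
      field_simp at hn
      linear_combination (2*(π:ℂ)*I) * hn
    have h5 : (1:ℂ) = (n:ℂ) * b := mul_left_cancel₀ h2piI h4
    have h6 : (1:ℤ) = n * b := by exact_mod_cast h5
    have h7 : (b:ℤ) ≤ 1 := Int.le_of_dvd one_pos ⟨n, by rw [h6]; ring⟩
    have : (2:ℤ) ≤ b := by exact_mod_cast hb
    omega
  have hgeom : ∑ j ∈ Finset.Icc 1 b, ξ ^ j = 0 := by
    rw [← Finset.Ico_add_one_right_eq_Icc, Finset.sum_Ico_eq_sum_range]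
    simp only [Nat.succ_sub_one, Nat.add_sub_cancel]
    calc ∑ i ∈ Finset.range b, ξ ^ (1 + i)
        = ξ * ∑ i ∈ Finset.range b, ξ ^ i := by
          rw [Finset.mul_sum]; exact Finset.sum_congr rfl fun i _ ↦ by rw [pow_add, pow_one]
      _ = ξ * ((ξ ^ b - 1) / (ξ - 1)) := by rw [geom_sum_eq hξ1]
      _ = 0 := by rw [hξb]; simp
  have hIcc : ∀ M : ℕ, ∑ m ∈ Finset.range (M+1), ξ ^ m / (m:ℂ)
      = ∑ m ∈ Finset.Icc 1 M, ξ ^ m / (m:ℂ) := by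
    intro M
    have hins : Finset.range (M+1) = insert 0 (Finset.Icc 1 M) := by
      ext x; simp only [Finset.mem_range, Finset.mem_insert, Finset.mem_Icc]; omega
    rw [hins, Finset.sum_insert (by simp)]
    simp
  have hA : Tendsto (fun N : ℕ ↦ ∑ j ∈ Finset.Icc 1 b,
      (((harmonic N : ℝ) - ∑ k ∈ Finset.range N, 1 / ((j:ℝ)/b + k) : ℝ) : ℂ) * ξ ^ j)
      atTop (𝓝 (∑ j ∈ Finset.Icc 1 b, ((_root_.digamma ((j:ℝ)/b) + γ : ℝ) : ℂ) * ξ ^ j)) := by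
    apply tendsto_finset_sum
    intro j hj
    rw [Finset.mem_Icc] at hj
    have hjpos : (0:ℝ) < j := by exact_mod_cast hj.1
    have hx : 0 < (j:ℝ)/b := div_pos hjpos hbR
    have hx1 : (j:ℝ)/b ≤ 1 := by
      rw [div_le_one hbR]; exact_mod_cast hj.2
    exact ((Complex.continuous_ofReal.tendsto _).comp (digamma_tendsto hx hx1)).mul_const _
  have hAN : ∀ N : ℕ, ∑ j ∈ Finset.Icc 1 b,
      (((harmonic N : ℝ) - ∑ k ∈ Finset.range N, 1 / ((j:ℝ)/b + k) : ℝ) : ℂ) * ξ ^ j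
      = (-(b:ℂ)) * ∑ m ∈ Finset.Icc 1 (N*b), ξ ^ m / (m:ℂ) := by
    intro N
    have step1 : ∀ j ∈ Finset.Icc 1 b,
        (((harmonic N : ℝ) - ∑ k ∈ Finset.range N, 1 / ((j:ℝ)/b + k) : ℝ) : ℂ) * ξ ^ j
        = (harmonic N : ℂ) * ξ ^ j
          - ∑ k ∈ Finset.range N, (b:ℂ) * (ξ ^ (j + b*k) / ((j + b*k : ℕ) : ℂ)) := by
      intro j hj
      rw [Finset.mem_Icc] at hj
      have hjpos : (0:ℝ) < j := by exact_mod_cast hj.1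
      rw [Complex.ofReal_sub, sub_mul, Complex.ofReal_sum, Finset.sum_mul]
      have hharm : ((((harmonic N : ℝ)):ℂ)) * ξ ^ j = (harmonic N : ℂ) * ξ ^ j := by
        norm_cast
      rw [hharm]
      congr 1
      apply Finset.sum_congr rfl
      intro k hk
      have hpow : ξ ^ (j + b*k) = ξ ^ j := by
        rw [pow_add, pow_mul, hξb, one_pow, mul_one]
      have hposR : (0:ℝ) < (j:ℝ) + b*k :=
        add_pos_of_pos_of_nonneg hjpos (by positivity)
      have hd : (j:ℝ)/b + k ≠ 0 :=
        ne_of_gt (add_pos_of_pos_of_nonneg (div_pos hjpos hbR) k.cast_nonneg)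
      have hR : (1/((j:ℝ)/b + k)) = b/((j:ℝ) + b*k) := by
        field_simp
      rw [hR, hpow]
      have hneC : ((j + b*k : ℕ) : ℂ) ≠ 0 := by
        rw [Nat.cast_ne_zero]; omega
      push_cast at hneC ⊢
      field_simp
      try ring
    rw [Finset.sum_congr rfl step1, Finset.sum_sub_distrib, ← Finset.mul_sum, hgeom, mul_zero]
    have e2 : ∑ j ∈ Finset.Icc 1 b, ∑ k ∈ Finset.range N,
        (b:ℂ) * (ξ ^ (j + b*k) / ((j + b*k : ℕ) : ℂ))
        = (b:ℂ) * ∑ m ∈ Finset.Icc 1 (N*b), ξ ^ m / (m:ℂ) := by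
      calc ∑ j ∈ Finset.Icc 1 b, ∑ k ∈ Finset.range N,
            (b:ℂ) * (ξ ^ (j + b*k) / ((j + b*k : ℕ) : ℂ))
          = (b:ℂ) * ∑ j ∈ Finset.Icc 1 b, ∑ k ∈ Finset.range N,
            (ξ ^ (j + b*k) / ((j + b*k : ℕ) : ℂ)) := by
            rw [Finset.mul_sum]
            exact Finset.sum_congr rfl fun j _ ↦ by rw [Finset.mul_sum]
        _ = (b:ℂ) * ∑ m ∈ Finset.Icc 1 (N*b), ξ ^ m / (m:ℂ) := by
            rw [← reindex_Icc_mul b N (by omega) (fun m ↦ ξ ^ m / (m:ℂ))]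
    rw [e2]
    ring
  have hcomp : Tendsto (fun N : ℕ ↦ N*b+1) atTop atTop := by
    apply tendsto_atTop_mono (fun N ↦ ?_) tendsto_id
    exact Nat.le_succ_of_le (Nat.le_mul_of_pos_right N (by omega))
  have hB : Tendsto (fun N : ℕ ↦ (-(b:ℂ)) * ∑ m ∈ Finset.Icc 1 (N*b), ξ ^ m / (m:ℂ))
      atTop (𝓝 ((-(b:ℂ)) * (-Complex.log (1 - ξ)))) := by
    apply Tendsto.const_mul
    have h := (tendsto_sum_pow_div_nat ξ hnorm hξ1).comp hcomp
    exact h.congr (fun N ↦ hIcc (N*b))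
  have hEq : ∑ j ∈ Finset.Icc 1 b, ((_root_.digamma ((j:ℝ)/b) + γ : ℝ) : ℂ) * ξ ^ j
      = (-(b:ℂ)) * (-Complex.log (1 - ξ)) :=
    tendsto_nhds_unique (hA.congr hAN) hB
  calc ∑ j ∈ Finset.Icc 1 b, (_root_.digamma ((j:ℝ) / b) : ℂ) * ξ ^ j
      = ∑ j ∈ Finset.Icc 1 b, ((_root_.digamma ((j:ℝ)/b) + γ : ℝ) : ℂ) * ξ ^ j
        - (γ:ℂ) * ∑ j ∈ Finset.Icc 1 b, ξ ^ j := by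
        rw [Finset.mul_sum, ← Finset.sum_sub_distrib]
        exact Finset.sum_congr rfl fun j _ ↦ by push_cast; ring
    _ = (-(b:ℂ)) * (-Complex.log (1 - ξ)) - (γ:ℂ) * 0 := by rw [hEq, hgeom]
    _ = b * Complex.log (1 - ξ) := by ring
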